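/- Let n ≥ 1, let p₀ ∈ ℝ and p ∈ ℝⁿ with ‖p‖ < p₀, and set d = p₀² − ‖p‖² (so d > 0). Let k > 0 be real and let ℓ = √(1 + d·k²) (so ℓ² − d·k² = 1 and ℓ > 0). Then the Lebesgue measure of the set E = {r ∈ ℝⁿ : k²·(p₀ + ⟨p, r⟩)² < ℓ²·(1 − ‖r‖²)} equals ω_n · ℓ / (1 + p₀²k²)^{(n+1)/2}, where ω_n is the Lebesgue measure of the closed unit ball in ℝⁿ. -/

import Mathlib

open scoped RealInnerProductSpace

/-- exact volume computation in Proposition 3.2 of the paper: the Lebesgue measure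
of the submaximality domain `E = {r : k²(p₀ + ⟨p,r⟩)² < ℓ²(1 − ‖r‖²)}` equals
`ω_n · ℓ / (1 + p₀²k²)^((n+1)/2)`, where `ω_n` is the volume of the closed unit ball in `ℝⁿ`. -/
theorem volume_submaximality_domain (n : ℕ) (hn : 1 ≤ n)
    (p₀ : ℝ) (p : EuclideanSpace ℝ (Fin n)) (hp : ‖p‖ < p₀)
    (k : ℝ) (hk : 0 < k) (ℓ : ℝ) (hℓ : ℓ = Real.sqrt (1 + (p₀ ^ 2 - ‖p‖ ^ 2) * k ^ 2)) :
    MeasureTheory.volume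
        {r : EuclideanSpace ℝ (Fin n) | k ^ 2 * (p₀ + ⟪p, r⟫) ^ 2 < ℓ ^ 2 * (1 - ‖r‖ ^ 2)}
      = ENNReal.ofReal
        ((MeasureTheory.volume (Metric.closedBall (0 : EuclideanSpace ℝ (Fin n)) 1)).toReal
          * ℓ / (1 + p₀ ^ 2 * k ^ 2) ^ (((n : ℝ) + 1) / 2)) := by
  classical
  have hp0 : 0 < p₀ := lt_of_le_of_lt (norm_nonneg p) hp
  have hdpos : 0 < p₀ ^ 2 - ‖p‖ ^ 2 := by nlinarith [norm_nonneg p]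
  have hargpos : 0 < 1 + (p₀ ^ 2 - ‖p‖ ^ 2) * k ^ 2 := by positivity
  have hℓpos : 0 < ℓ := hℓ ▸ Real.sqrt_pos.2 hargpos
  have hℓ2 : ℓ ^ 2 = 1 + (p₀ ^ 2 - ‖p‖ ^ 2) * k ^ 2 := by
    rw [hℓ]; exact Real.sq_sqrt hargpos.le
  obtain ⟨a, ha_def⟩ : ∃ x : ℝ, x = 1 + p₀ ^ 2 * k ^ 2 := ⟨_, rfl⟩
  rw [← ha_def]
  have hapos : 0 < a := by rw [ha_def]; positivity
  have haa : a = ℓ ^ 2 + k ^ 2 * ‖p‖ ^ 2 := by rw [ha_def, hℓ2]; ring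
  obtain ⟨s, hs_def⟩ : ∃ x : ℝ, x = Real.sqrt a := ⟨_, rfl⟩
  have hspos : 0 < s := hs_def ▸ Real.sqrt_pos.2 hapos
  have hs2 : s ^ 2 = a := by rw [hs_def]; exact Real.sq_sqrt hapos.le
  obtain ⟨u, hu_def⟩ : ∃ x : ℝ, x = 1 / s := ⟨_, rfl⟩
  have hsu : s * u = 1 := by rw [hu_def]; field_simp
  obtain ⟨A, hA_def⟩ : ∃ x : ℝ, x = 1 / a := ⟨_, rfl⟩
  have haA : a * A = 1 := by rw [hA_def]; field_simp
  have F1 : a * u ^ 2 = 1 := by linear_combination (s * u + 1) * hsu - u ^ 2 * hs2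
  have hu0 : u ≠ 0 := by
    intro h; rw [h, mul_zero] at hsu; exact one_ne_zero hsu.symm
  have hsau : s = a * u := by
    apply mul_right_cancel₀ hu0
    linear_combination hsu - F1
  have FC : ℓ ^ 2 * A = 1 - k ^ 2 * ‖p‖ ^ 2 * A := by
    linear_combination (-A) * haa + haA
  -- the two auxiliary coefficients
  obtain ⟨c, H1⟩ : ∃ c : ℝ, c * ‖p‖ ^ 2 * (a * s) = ℓ * s - a := by
    by_cases hpz : p = 0
    · refine ⟨0, ?_⟩
      have h0 : ‖p‖ = 0 := by rw [hpz]; simp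
      have haℓ : a = ℓ ^ 2 := by rw [haa, h0]; ring
      have hsℓ : s = ℓ := by rw [hs_def, haℓ]; exact Real.sqrt_sq hℓpos.le
      rw [h0, hsℓ, haℓ]; ring
    · have hN : ‖p‖ ≠ 0 := norm_ne_zero_iff.2 hpz
      refine ⟨(ℓ * s - a) / (‖p‖ ^ 2 * (a * s)), ?_⟩
      field_simp
  obtain ⟨c', H2⟩ : ∃ c' : ℝ, c' * ‖p‖ ^ 2 * ℓ = a - s * ℓ := by
    by_cases hpz : p = 0
    · refine ⟨0, ?_⟩
      have h0 : ‖p‖ = 0 := by rw [hpz]; simp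
      have haℓ : a = ℓ ^ 2 := by rw [haa, h0]; ring
      have hsℓ : s = ℓ := by rw [hs_def, haℓ]; exact Real.sqrt_sq hℓpos.le
      rw [h0, hsℓ, haℓ]; ring
    · have hN : ‖p‖ ≠ 0 := norm_ne_zero_iff.2 hpz
      refine ⟨(a - s * ℓ) / (‖p‖ ^ 2 * ℓ), ?_⟩
      field_simp
  have F3 : c * ‖p‖ ^ 2 * a = ℓ - a * u := by
    apply mul_left_cancel₀ hspos.ne'
    linear_combination H1 + a * hsu
  have F4 : c * ‖p‖ ^ 2 = ℓ * A - u := by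
    linear_combination A * F3 - (c * ‖p‖ ^ 2 + u) * haA
  -- the rank-one perturbation maps
  set P : EuclideanSpace ℝ (Fin n) →ₗ[ℝ] EuclideanSpace ℝ (Fin n) :=
    (innerSL ℝ p).toLinearMap.smulRight p with hP_def
  set L : EuclideanSpace ℝ (Fin n) →ₗ[ℝ] EuclideanSpace ℝ (Fin n) :=
    u • LinearMap.id + c • P with hL_def
  set L' : EuclideanSpace ℝ (Fin n) →ₗ[ℝ] EuclideanSpace ℝ (Fin n) :=
    s • LinearMap.id + c' • P with hL'_def
  have hLapp : ∀ y, L y = u • y + (c * ⟪p, y⟫) • p := by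
    intro y; simp [hL_def, hP_def, smul_smul]
  have hL'app : ∀ y, L' y = s • y + (c' * ⟪p, y⟫) • p := by
    intro y; simp [hL'_def, hP_def, smul_smul]
  have hexp : ∀ (v w : EuclideanSpace ℝ (Fin n)) (α β : ℝ),
      ‖α • v + β • w‖ ^ 2 = α ^ 2 * ‖v‖ ^ 2 + 2 * (α * β) * ⟪w, v⟫ + β ^ 2 * ‖w‖ ^ 2 := by
    intro v w α β
    rw [norm_add_sq_real, norm_smul, norm_smul, real_inner_smul_left, real_inner_smul_right,
      real_inner_comm v w]
    simp only [Real.norm_eq_abs, mul_pow, sq_abs]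
    ring
  have hinnerL : ∀ y, ⟪p, L y⟫ = ℓ * A * ⟪p, y⟫ := by
    intro y
    rw [hLapp y, inner_add_right, real_inner_smul_right, real_inner_smul_right,
      real_inner_self_eq_norm_sq]
    linear_combination ⟪p, y⟫ * F4
  have hQL : ∀ y, ℓ ^ 2 * a * ‖L y‖ ^ 2 + k ^ 2 * a * ⟪p, L y⟫ ^ 2 = ℓ ^ 2 * ‖y‖ ^ 2 := by
    intro y
    rw [hinnerL y, hLapp y, hexp y p u (c * ⟪p, y⟫)]
    by_cases hpz : p = 0
    · simp only [hpz, inner_zero_left, inner_zero_right, norm_zero]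
      linear_combination ℓ ^ 2 * ‖y‖ ^ 2 * F1
    · have hN : ‖p‖ ^ 2 ≠ 0 := pow_ne_zero _ (norm_ne_zero_iff.2 hpz)
      apply mul_left_cancel₀ hN
      linear_combination
        (A * a * ℓ ^ 3 * ⟪p, y⟫ ^ 2 + ‖p‖ ^ 2 * a * c * ℓ ^ 2 * ⟪p, y⟫ ^ 2
            + a * ℓ ^ 2 * ⟪p, y⟫ ^ 2 * u) * F4
          + (‖p‖ ^ 2 * ‖y‖ ^ 2 * ℓ ^ 2 - ℓ ^ 2 * ⟪p, y⟫ ^ 2) * F1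
          + (A * ‖p‖ ^ 2 * k ^ 2 * ℓ ^ 2 * ⟪p, y⟫ ^ 2 + A * ℓ ^ 4 * ⟪p, y⟫ ^ 2) * haA
          + (ℓ ^ 2 * ⟪p, y⟫ ^ 2) * FC
  have hLL' : ∀ z, L (L' z) = z := by
    intro z
    have expand : L (L' z) = (s * u) • z
        + (s * (c * ⟪p, z⟫) + (c' * ⟪p, z⟫) * u + (c' * ⟪p, z⟫) * (c * ‖p‖ ^ 2)) • p := by
      rw [hL'app z, map_add, map_smul, map_smul, hLapp z, hLapp p,
        real_inner_self_eq_norm_sq, smul_add, smul_add, smul_smul, smul_smul, smul_smul,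
        smul_smul, add_smul, add_smul]
      module
    rw [expand, hsu, one_smul]
    by_cases hpz : p = 0
    · rw [hpz]; simp
    · have hN : ‖p‖ ^ 2 ≠ 0 := pow_ne_zero _ (norm_ne_zero_iff.2 hpz)
      have key : (‖p‖ ^ 2 * (ℓ * a))
          * (s * (c * ⟪p, z⟫) + (c' * ⟪p, z⟫) * u + (c' * ⟪p, z⟫) * (c * ‖p‖ ^ 2))
          = (‖p‖ ^ 2 * (ℓ * a)) * 0 := by
        linear_combination (‖p‖ ^ 2 * a * c * ⟪p, z⟫ + a * ⟪p, z⟫ * u) * H2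
          + (a ^ 2 * ⟪p, z⟫) * F4 + (a * ℓ * ⟪p, z⟫) * haA - (a * ℓ * ⟪p, z⟫) * hsu
      have h0 := mul_left_cancel₀
        (mul_ne_zero hN (mul_ne_zero hℓpos.ne' hapos.ne')) key
      rw [h0, zero_smul, add_zero]
  -- the center of the ellipsoid
  set r₀ : EuclideanSpace ℝ (Fin n) := (-(k ^ 2 * p₀ * A)) • p with hr₀_def
  have hsub : ∀ r : EuclideanSpace ℝ (Fin n), r - r₀ = r + (k ^ 2 * p₀ * A) • p := by
    intro r; rw [hr₀_def, neg_smul, sub_neg_eq_add]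
  have hnorm_sub : ∀ r : EuclideanSpace ℝ (Fin n), ‖r - r₀‖ ^ 2
      = ‖r‖ ^ 2 + 2 * (k ^ 2 * p₀ * A) * ⟪p, r⟫ + (k ^ 2 * p₀ * A) ^ 2 * ‖p‖ ^ 2 := by
    intro r
    have h := hexp r p 1 (k ^ 2 * p₀ * A)
    rw [one_smul] at h
    rw [hsub r, h]
    ring
  have hinner_sub : ∀ r : EuclideanSpace ℝ (Fin n),
      ⟪p, r - r₀⟫ = ⟪p, r⟫ + (k ^ 2 * p₀ * A) * ‖p‖ ^ 2 := by
    intro r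
    rw [hsub r, inner_add_right, real_inner_smul_right, real_inner_self_eq_norm_sq]
  have hident : ∀ r : EuclideanSpace ℝ (Fin n),
      ℓ ^ 2 * a * ‖r - r₀‖ ^ 2 + k ^ 2 * a * ⟪p, r - r₀⟫ ^ 2 - ℓ ^ 2
      = a * (k ^ 2 * (p₀ + ⟪p, r⟫) ^ 2 - ℓ ^ 2 * (1 - ‖r‖ ^ 2)) := by
    intro r
    rw [hnorm_sub r, hinner_sub r]
    linear_combination
      (A * ‖p‖ ^ 2 * k ^ 4 * ℓ ^ 2 * p₀ ^ 2 + A * (‖p‖ ^ 2) ^ 2 * k ^ 6 * p₀ ^ 2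
          + 2 * ‖p‖ ^ 2 * k ^ 4 * p₀ * ⟪p, r⟫ + 2 * k ^ 2 * ℓ ^ 2 * p₀ * ⟪p, r⟫) * haA
        + (‖p‖ ^ 2 * k ^ 4 * p₀ ^ 2) * FC
        + (-1 + a + 2 * k ^ 2 * p₀ * ⟪p, r⟫) * hℓ2
        + (1 - ‖p‖ ^ 2 * k ^ 2 - 2 * k ^ 2 * p₀ * ⟪p, r⟫) * ha_def
  have hEiff : ∀ r : EuclideanSpace ℝ (Fin n),
      (k ^ 2 * (p₀ + ⟪p, r⟫) ^ 2 < ℓ ^ 2 * (1 - ‖r‖ ^ 2))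
      ↔ ℓ ^ 2 * a * ‖r - r₀‖ ^ 2 + k ^ 2 * a * ⟪p, r - r₀⟫ ^ 2 < ℓ ^ 2 := by
    intro r
    have hid := hident r
    constructor
    · intro h
      have h2 : a * (k ^ 2 * (p₀ + ⟪p, r⟫) ^ 2 - ℓ ^ 2 * (1 - ‖r‖ ^ 2)) < 0 :=
        mul_neg_of_pos_of_neg hapos (by linarith)
      linarith
    · intro h
      by_contra hc
      push_neg at hc
      have h2 : 0 ≤ a * (k ^ 2 * (p₀ + ⟪p, r⟫) ^ 2 - ℓ ^ 2 * (1 - ‖r‖ ^ 2)) :=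
        mul_nonneg hapos.le (by linarith)
      linarith
  -- the set is the affine image of the unit ball
  have hset : {r : EuclideanSpace ℝ (Fin n) | k ^ 2 * (p₀ + ⟪p, r⟫) ^ 2 < ℓ ^ 2 * (1 - ‖r‖ ^ 2)}
      = (fun y => r₀ + L y) '' Metric.ball 0 1 := by
    ext r
    simp only [Set.mem_setOf_eq, Set.mem_image, Metric.mem_ball, dist_zero_right]
    rw [hEiff r]
    constructor
    · intro h
      refine ⟨L' (r - r₀), ?_, ?_⟩
      · have hq := hQL (L' (r - r₀))
        rw [hLL'] at hq
        have hx2 : ℓ ^ 2 * ‖L' (r - r₀)‖ ^ 2 < ℓ ^ 2 * 1 := by rw [mul_one, ← hq]; exact h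
        have hx3 : ‖L' (r - r₀)‖ ^ 2 < 1 ^ 2 := by
          have := (mul_lt_mul_iff_right₀ (by positivity : (0:ℝ) < ℓ ^ 2)).mp hx2
          simpa using this
        exact lt_of_pow_lt_pow_left₀ 2 zero_le_one hx3
      · rw [hLL']; abel
    · rintro ⟨y, hy, rfl⟩
      have heq : r₀ + L y - r₀ = L y := by abel
      rw [heq, hQL y]
      have hy2 : ‖y‖ ^ 2 < 1 := by
        have := pow_lt_one₀ (norm_nonneg y) hy two_ne_zero
        simpa using this
      calc ℓ ^ 2 * ‖y‖ ^ 2 < ℓ ^ 2 * 1 :=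
            (mul_lt_mul_iff_right₀ (by positivity : (0:ℝ) < ℓ ^ 2)).mpr hy2
        _ = ℓ ^ 2 := mul_one _
  -- determinant of L
  have hdet_s : LinearMap.det L * s ^ (n + 1) = ℓ := by
    have b := (EuclideanSpace.basisFun (Fin n) ℝ).toBasis
    have hM : LinearMap.toMatrix (EuclideanSpace.basisFun (Fin n) ℝ).toBasis
        (EuclideanSpace.basisFun (Fin n) ℝ).toBasis L
        = u • (1 + Matrix.replicateCol (Fin 1) (fun i => c * s * p i)
            * Matrix.replicateRow (Fin 1) (fun i => p i)) := by
      ext i j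
      rw [LinearMap.toMatrix_apply]
      rw [OrthonormalBasis.coe_toBasis_repr_apply, OrthonormalBasis.coe_toBasis,
        EuclideanSpace.basisFun_apply, hLapp, EuclideanSpace.basisFun_repr]
      have hinner : ⟪p, EuclideanSpace.single j (1 : ℝ)⟫ = p j := by
        rw [EuclideanSpace.inner_single_right]; simp
      rw [PiLp.add_apply, PiLp.smul_apply, PiLp.smul_apply, hinner]
      simp only [Matrix.smul_apply, Matrix.add_apply, Matrix.one_apply, Matrix.mul_apply,
        Matrix.replicateCol_apply, Matrix.replicateRow_apply, Finset.univ_unique, Finset.sum_singleton,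
        EuclideanSpace.single_apply, smul_eq_mul]
      rcases eq_or_ne i j with h | h
      · subst h; simp only [if_pos rfl]
        linear_combination (-(c * p i ^ 2)) * hsu
      · simp only [if_neg h, if_neg (Ne.symm h)]
        linear_combination (-(c * p i * p j)) * hsu
    have hdot : dotProduct (fun i => p i) (fun i => c * s * p i) = c * s * ‖p‖ ^ 2 := by
      have h := real_inner_self_eq_norm_sq p
      rw [PiLp.inner_apply] at h
      simp only [RCLike.inner_apply, conj_trivial] at h
      rw [dotProduct, ← h, Finset.mul_sum]
      exact Finset.sum_congr rfl fun i _ => by ring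
    have hdetL : LinearMap.det L = u ^ n * (1 + c * s * ‖p‖ ^ 2) := by
      rw [← LinearMap.det_toMatrix (EuclideanSpace.basisFun (Fin n) ℝ).toBasis, hM,
        Matrix.det_smul]
      erw [Matrix.det_one_add_replicateCol_mul_replicateRow]
      rw [hdot, Fintype.card_fin]
    rw [hdetL]
    have hstep : u ^ n * (1 + c * s * ‖p‖ ^ 2) * s ^ (n + 1)
        = (s * u) ^ n * (s * (1 + c * s * ‖p‖ ^ 2)) := by ring
    rw [hstep, hsu, one_pow, one_mul]
    linear_combination (s ^ 2) * F4
      + (1 + A * a * ℓ * u + A * ℓ * s - a * u ^ 2 - s * u) * hsau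
      + (A * a * ℓ - a * u) * F1 + ℓ * haA
  have hsne : s ^ (n + 1) ≠ 0 := pow_ne_zero _ hspos.ne'
  have hdet : LinearMap.det L = ℓ / s ^ (n + 1) := by
    rw [eq_div_iff hsne]; exact hdet_s
  -- compute the volume
  haveI : Nontrivial (EuclideanSpace ℝ (Fin n)) :=
    ⟨⟨EuclideanSpace.single ⟨0, hn⟩ (1 : ℝ), 0, fun h => by simpa using congrArg norm h⟩⟩
  rw [hset, show (fun y => r₀ + L y) = (fun z => r₀ + z) ∘ ⇑L from rfl, Set.image_comp,
    Set.image_add_left, MeasureTheory.measure_preimage_add,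
    MeasureTheory.Measure.addHaar_image_linearMap,
    show MeasureTheory.volume (Metric.ball (0 : EuclideanSpace ℝ (Fin n)) 1)
        = MeasureTheory.volume (Metric.closedBall (0 : EuclideanSpace ℝ (Fin n)) 1) from
      (MeasureTheory.Measure.addHaar_closedBall_eq_addHaar_ball _ _ _).symm]
  have hvol_ne : MeasureTheory.volume (Metric.closedBall (0 : EuclideanSpace ℝ (Fin n)) 1) ≠ ⊤ :=
    MeasureTheory.measure_closedBall_lt_top.ne
  conv_lhs => rw [← ENNReal.ofReal_toReal hvol_ne]
  rw [← ENNReal.ofReal_mul (abs_nonneg _)]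
  congr 1
  have hrpow : a ^ (((n : ℝ) + 1) / 2) = s ^ (n + 1) := by
    rw [hs_def, Real.sqrt_eq_rpow, ← Real.rpow_natCast (a ^ ((1 : ℝ) / 2)) (n + 1),
      ← Real.rpow_mul hapos.le]
    congr 1
    push_cast
    ring
  rw [hdet, hrpow, abs_of_pos (div_pos hℓpos (pow_pos hspos _))]
  ring
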